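/- Let n ≥ 2, let H be a closed subspace of a complex Hilbert space K, and let V_1,…,V_n be commuting bounded operators on K such that V_n is an isometry, V_j = V_{n−j}^* V_n for j = 1,…,n−1, and H is invariant under each adjoint V_j^*. Define S_j := P_H V_j|_H (so that S_j^* = V_j^*|_H), and note ‖S_n‖ ≤ 1; let D := (I_H − S_n^* S_n)^{1/2} be the positive square root of the positive operator I_H − S_n^* S_n, and let Q be the orthogonal projection of H onto (ker D)^⊥. Suppose E_1,…,E_{n−1} are bounded operators on H satisfying E_j = Q E_j Q and S_j − S_{n−j}^* S_n = D E_j D for j = 1,…,n−1. Then for every i = 1,…,n−1 and every x ∈ ker D one has E_i^* D S_i x = E_{n−i}^* D S_{n−i} x; that is, the operator E_i^* D S_i − E_{n−i}^* D S_{n−i} vanishes on ker D. -/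

import Mathlib

open ContinuousLinearMap

set_option maxHeartbeats 1000000 in
/-- Let `n ≥ 2` and let `(V₁,…,Vₙ)` be a commuting tuple on `K` with `Vₙ` an isometry,
`Vⱼ = V_{n−j}* Vₙ` and `H` invariant under each `Vⱼ*`.  With `Sⱼ = P_H Vⱼ|_H`, `D` the positive
square root of `I − Sₙ* Sₙ`, `Q` the orthogonal projection of `H` onto `(ker D)ᗮ`, and
`E₁,…,E_{n−1}` operators with `Eⱼ = Q Eⱼ Q` and `Sⱼ − S_{n−j}* Sₙ = D Eⱼ D`, the operator
`Eᵢ* D Sᵢ − E_{n−i}* D S_{n−i}` vanishes on `ker D` for `i = 1,…,n−1`. -/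
theorem stmt_3 {K : Type*} [NormedAddCommGroup K] [InnerProductSpace ℂ K] [CompleteSpace K]
    (Hs : Submodule ℂ K) [CompleteSpace Hs]
    (n : ℕ) (hn : 2 ≤ n)
    (V : ℕ → (K →L[ℂ] K))
    (hVcomm : ∀ i j, 1 ≤ i → i ≤ n → 1 ≤ j → j ≤ n → V i * V j = V j * V i)
    (hViso : ∀ x : K, ‖V n x‖ = ‖x‖)
    (hVrel : ∀ j, 1 ≤ j → j ≤ n - 1 → V j = adjoint (V (n - j)) * V n)
    (hinv : ∀ j, 1 ≤ j → j ≤ n → ∀ h : Hs, adjoint (V j) (h : K) ∈ Hs)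
    (S : ℕ → (Hs →L[ℂ] Hs))
    (hS : ∀ j, 1 ≤ j → j ≤ n →
      S j = Hs.orthogonalProjectionOnto.comp ((V j).comp Hs.subtypeL))
    (D : Hs →L[ℂ] Hs)
    (hDpos : D.IsPositive)
    (hDsq : D * D = 1 - adjoint (S n) * S n)
    (Q : Hs →L[ℂ] Hs)
    -- `Q` is the orthogonal projection of `H` onto `(ker D)ᗮ`: the self-adjoint idempotent
    -- with range `(ker D)ᗮ`
    (hQidem : Q * Q = Q) (hQsa : IsSelfAdjoint Q)
    (hQran : LinearMap.range (Q : Hs →ₗ[ℂ] Hs) = (LinearMap.ker (D : Hs →ₗ[ℂ] Hs))ᗮ)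
    (E : ℕ → (Hs →L[ℂ] Hs))
    (hEQ : ∀ j, 1 ≤ j → j ≤ n - 1 → E j = Q * E j * Q)
    (hE : ∀ j, 1 ≤ j → j ≤ n - 1 → S j - adjoint (S (n - j)) * S n = D * E j * D) :
    ∀ i, 1 ≤ i → i ≤ n - 1 → ∀ x : Hs, D x = 0 →
      adjoint (E i) (D (S i x)) = adjoint (E (n - i)) (D (S (n - i) x)) := by
  intro i hi1 hi2 x hx
  have hni1 : 1 ≤ n - i := by omega
  have hni2 : n - i ≤ n - 1 := by omega
  have hnni : n - (n - i) = i := by omega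
  have hDsa : adjoint D = D := hDpos.isSelfAdjoint
  -- Step 0: Sₙ*Sₙ x = x
  have hSnx : adjoint (S n) (S n x) = x := by
    have h0 : (D * D) x = 0 := by simp [mul_apply, hx]
    rw [hDsq] at h0
    have h1 : x - adjoint (S n) (S n x) = 0 := by
      simpa [sub_apply, one_apply, mul_apply] using h0
    exact (sub_eq_zero.mp h1).symm
  -- Step 1: V n ↑x ∈ Hs
  have hVnmem : V n (x : K) ∈ Hs := by
    have hSneq : (S n x : K) = (Hs.orthogonalProjectionOnto (V n (x : K)) : K) := by
      rw [hS n (by omega) le_rfl]; rfl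
    have hnx : ‖S n x‖ = ‖x‖ := by
      have h1 : (inner ℂ (S n x) (S n x) : ℂ) = inner ℂ x x := by
        rw [← adjoint_inner_left, hSnx]
      have h3 : ‖S n x‖ ^ 2 = ‖x‖ ^ 2 := by
        have h2 := congrArg RCLike.re h1
        simpa [inner_self_eq_norm_sq, ← Complex.ofReal_pow] using h2
      nlinarith [norm_nonneg (S n x), norm_nonneg x]
    set z := V n (x : K) with hz
    have hnz : ‖(Hs.orthogonalProjectionOnto z : K)‖ = ‖z‖ := by
      rw [← hSneq, Submodule.norm_coe, hnx, hz, hViso (x : K), Submodule.norm_coe]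
    have horth : (inner ℂ ((Hs.orthogonalProjectionOnto z : K)) (z - Hs.orthogonalProjectionOnto z) : ℂ) = 0 :=
      (Submodule.mem_orthogonal Hs _).mp (Hs.sub_starProjection_mem_orthogonal z) _
        (Hs.orthogonalProjectionOnto z).2
    have hsum : ‖z‖ * ‖z‖ = ‖(Hs.orthogonalProjectionOnto z : K)‖ * ‖(Hs.orthogonalProjectionOnto z : K)‖
        + ‖z - (Hs.orthogonalProjectionOnto z : K)‖ * ‖z - (Hs.orthogonalProjectionOnto z : K)‖ := by
      have h5 := norm_add_sq_eq_norm_sq_add_norm_sq_of_inner_eq_zero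
        ((Hs.orthogonalProjectionOnto z : K)) (z - (Hs.orthogonalProjectionOnto z : K)) horth
      rw [add_sub_cancel] at h5
      exact h5
    have hw : ‖z - (Hs.orthogonalProjectionOnto z : K)‖ = 0 := by
      have h4 : ‖z - (Hs.orthogonalProjectionOnto z : K)‖ * ‖z - (Hs.orthogonalProjectionOnto z : K)‖ = 0 := by
        rw [hnz] at hsum; linarith
      nlinarith [norm_nonneg (z - (Hs.orthogonalProjectionOnto z : K))]
    have hzz : (Hs.orthogonalProjectionOnto z : K) = z :=
      (sub_eq_zero.mp (norm_eq_zero.mp hw)).symm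
    exact Hs.starProjection_eq_self_iff.mp hzz
  -- membership and value of S j x for 1 ≤ j ≤ n-1
  have hmemS : ∀ j, 1 ≤ j → j ≤ n - 1 → V j (x : K) ∈ Hs ∧ ((S j x : Hs) : K) = V j (x : K) := by
    intro j hj1 hj2
    have hm : V j (x : K) ∈ Hs := by
      rw [hVrel j hj1 hj2]
      exact hinv (n - j) (by omega) (by omega) ⟨V n (x : K), hVnmem⟩
    refine ⟨hm, ?_⟩
    rw [hS j hj1 (by omega)]
    exact Hs.starProjection_eq_self_iff.mpr hm
  -- adjoint formula
  have hadjS : ∀ j, 1 ≤ j → j ≤ n → ∀ h : Hs,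
      ((adjoint (S j) h : Hs) : K) = adjoint (V j) (h : K) := by
    intro j hj1 hj2 h
    rw [hS j hj1 hj2, adjoint_comp, adjoint_comp, Hs.adjoint_subtypeL,
      Hs.adjoint_orthogonalProjectionOnto]
    simp only [comp_apply, Submodule.subtypeL_apply]
    exact Hs.starProjection_eq_self_iff.mpr (hinv j hj1 hj2 h)
  -- adjoint of V relation
  have hadjV : ∀ j, 1 ≤ j → j ≤ n - 1 → adjoint (V j) = adjoint (V n) * V (n - j) := by
    intro j hj1 hj2
    have := congrArg star (hVrel j hj1 hj2)
    rw [star_mul] at this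
    simpa only [star_eq_adjoint, adjoint_adjoint] using this
  -- key computation: D (Eⱼ* (D (Sⱼ x))) = Sⱼ*(Sⱼ x) - Sₙ*(S_{n-j}(Sⱼ x))
  have hkey : ∀ j, 1 ≤ j → j ≤ n - 1 → D (adjoint (E j) (D (S j x)))
      = adjoint (S j) (S j x) - adjoint (S n) (S (n - j) (S j x)) := by
    intro j hj1 hj2
    have h2 : adjoint (S j - adjoint (S (n - j)) * S n) = adjoint (D * E j * D) := by
      rw [hE j hj1 hj2]
    simp only [map_sub, mul_def, adjoint_comp, adjoint_adjoint, hDsa] at h2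
    have h3 : adjoint (S j) - adjoint (S n) * S (n - j) = D * (adjoint (E j) * D) := by
      simp only [mul_def]; exact h2
    calc D (adjoint (E j) (D (S j x))) = (D * (adjoint (E j) * D)) (S j x) := by
          simp [mul_apply]
      _ = (adjoint (S j) - adjoint (S n) * S (n - j)) (S j x) := by rw [← h3]
      _ = adjoint (S j) (S j x) - adjoint (S n) (S (n - j) (S j x)) := by
          simp [sub_apply, mul_apply]
  -- first vector identity : Sᵢ* Sᵢ x = S_{n-i}* S_{n-i} x
  have hVV : V (n - i) (V i (x : K)) = V i (V (n - i) (x : K)) := by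
    have := congrArg (fun T => T (x : K)) (hVcomm (n - i) i (by omega) (by omega) hi1 (by omega))
    simpa [mul_apply] using this
  have hid1 : adjoint (S i) (S i x) = adjoint (S (n - i)) (S (n - i) x) := by
    apply Subtype.ext
    rw [hadjS i hi1 (by omega) (S i x), hadjS (n - i) hni1 (by omega) (S (n - i) x),
      (hmemS i hi1 hi2).2, (hmemS (n - i) hni1 hni2).2]
    rw [hadjV i hi1 hi2, hadjV (n - i) hni1 hni2, hnni]
    show adjoint (V n) (V (n - i) (V i (x : K))) = adjoint (V n) (V i (V (n - i) (x : K)))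
    rw [hVV]
  -- second vector identity : S_{n-i}(Sᵢ x) = Sᵢ(S_{n-i} x)
  have hSo : ∀ j, 1 ≤ j → j ≤ n → ∀ y : Hs,
      S j y = Hs.orthogonalProjectionOnto (V j (y : K)) := by
    intro j hj1 hj2 y; rw [hS j hj1 hj2]; rfl
  have hid2 : S (n - i) (S i x) = S i (S (n - i) x) := by
    rw [hSo (n - i) hni1 (by omega) (S i x), hSo i hi1 (by omega) (S (n - i) x),
      (hmemS i hi1 hi2).2, (hmemS (n - i) hni1 hni2).2, hVV]
  -- so D a = D b
  set a := adjoint (E i) (D (S i x)) with ha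
  set b := adjoint (E (n - i)) (D (S (n - i) x)) with hb
  have hDab : D (a - b) = 0 := by
    rw [map_sub, hkey i hi1 hi2]
    have hk2 := hkey (n - i) hni1 hni2
    rw [hnni] at hk2
    rw [hk2, hid1, hid2]
    abel
  -- a, b ∈ range Q = (ker D)ᗮ
  have hmemQ : ∀ j, 1 ≤ j → j ≤ n - 1 → ∀ y : Hs, adjoint (E j) y ∈ LinearMap.range (Q : Hs →ₗ[ℂ] Hs) := by
    intro j hj1 hj2 y
    have h2 : adjoint (E j) = adjoint (Q * E j * Q) := by rw [← hEQ j hj1 hj2]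
    simp only [mul_def, adjoint_comp, hQsa.adjoint_eq] at h2
    rw [h2]
    exact ⟨(adjoint (E j)) (Q y), by simp [comp_apply]⟩
  have hmema : a - b ∈ (LinearMap.ker (D : Hs →ₗ[ℂ] Hs))ᗮ := by
    rw [← hQran]
    exact Submodule.sub_mem _ (hmemQ i hi1 hi2 _) (hmemQ (n - i) hni1 hni2 _)
  have : a - b = 0 := by
    have h0 : (inner ℂ (a - b) (a - b) : ℂ) = 0 :=
      (Submodule.mem_orthogonal _ _).mp hmema (a - b) (LinearMap.mem_ker.mpr hDab)
    exact inner_self_eq_zero.mp h0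
  exact sub_eq_zero.mp this
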